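/- Let G be a finite group acting transitively and faithfully with fixity 3 on a finite set Ω, and let N be a minimal normal subgroup of prime power order p^n acting semi-regularly. Suppose g ∈ G is nontrivial and fixes exactly three points, all lying in a single N-orbit ᾱ, and suppose g stabilizes some N-orbit other than ᾱ. Then |N| ∈ {3, 9}. -/

import Mathlib

open MulAction Pointwise

def HasFixity (G Ω : Type*) [Group G] [MulAction G Ω] (k : ℕ) : Prop :=
  (∀ g : G, g ≠ 1 → (fixedBy Ω g).ncard ≤ k) ∧ ∃ g : G, g ≠ 1 ∧ (fixedBy Ω g).ncard = k

def IsSemiregular (G Ω : Type*) [Group G] [MulAction G Ω] (N : Subgroup G) : Prop :=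
  ∀ n ∈ N, n ≠ 1 → ∀ ω : Ω, n • ω ≠ ω

def IsMinimalNormal (G : Type*) [Group G] (N : Subgroup G) : Prop :=
  N.Normal ∧ N ≠ ⊥ ∧ ∀ M : Subgroup G, M.Normal → M ≤ N → M = ⊥ ∨ M = N

def IsOrbitOf (G Ω : Type*) [Group G] [MulAction G Ω] (N : Subgroup G) (s : Set Ω) : Prop :=
  ∃ ω : Ω, s = MulAction.orbit N ω

def IsRegularOn (G Ω : Type*) [Group G] [MulAction G Ω] (R : Subgroup G) : Prop :=
  (∀ ω ω' : Ω, ∃ r ∈ R, r • ω = ω') ∧ ∀ r ∈ R, r ≠ 1 → ∀ ω : Ω, r • ω ≠ ω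

def IsFrobeniusOn (G Ω : Type*) [Group G] [MulAction G Ω] (F : Subgroup G) (s : Set Ω) : Prop :=
  (∃ f ∈ F, f ≠ 1 ∧ ∃ ω ∈ s, f • ω = ω) ∧
  ∀ f ∈ F, f ≠ 1 → ∀ ω ∈ s, ∀ ω' ∈ s, f • ω = ω → f • ω' = ω' → ω = ω'

lemma free_card_dvd {H X : Type*} [Group H] [Finite H] [Finite X] [MulAction H X]
    (hfree : ∀ h : H, h ≠ 1 → ∀ x : X, h • x ≠ x) : Nat.card H ∣ Nat.card X := by
  classical
  have horb : ∀ x : X, H ≃ orbit H x := by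
    intro x
    refine Equiv.ofBijective (fun h : H => (⟨h • x, mem_orbit x h⟩ : orbit H x)) ⟨?_, ?_⟩
    · intro a b hab
      simp only [Subtype.mk.injEq] at hab
      by_contra hne
      refine hfree (b⁻¹ * a) (fun hh => hne ((inv_mul_eq_one.mp hh).symm)) x ?_
      rw [mul_smul, hab, inv_smul_smul]
    · rintro ⟨y, h, rfl⟩; exact ⟨h, rfl⟩
  have e : X ≃ (orbitRel.Quotient H X) × H :=
    (selfEquivSigmaOrbits H X).trans
      ((Equiv.sigmaCongrRight fun q => (horb (Quotient.out q)).symm).trans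
        (Equiv.sigmaEquivProd _ H))
  rw [Nat.card_congr e, Nat.card_prod]
  exact dvd_mul_left _ _

theorem stmt_10 (G Ω : Type*) [Group G] [Finite G] [MulAction G Ω] [Finite Ω]
    [FaithfulSMul G Ω] [IsPretransitive G Ω] (hfix : HasFixity G Ω 3)
    (N : Subgroup G) (hmin : IsMinimalNormal G N)
    (p : ℕ) (n : ℕ) (hp : p.Prime) (hcard : Nat.card N = p ^ n)
    (hsemi : IsSemiregular G Ω N)
    (g : G) (hg : g ≠ 1) (α : Ω)
    (h3 : (fixedBy Ω g).ncard = 3) (hsub : fixedBy Ω g ⊆ MulAction.orbit N α)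
    (hother : ∃ s : Set Ω, IsOrbitOf G Ω N s ∧ s ≠ MulAction.orbit N α ∧ g • s = s) :
    Nat.card N = 3 ∨ Nat.card N = 9 := by
  classical
  haveI := Fact.mk hp
  haveI hN : N.Normal := hmin.1
  obtain ⟨s, ⟨ω₀, rfl⟩, hsne, hgs⟩ := hother
  -- a fixed point β of g, in the orbit of α
  have hfne : (fixedBy Ω g).Nonempty := by
    rw [← Set.ncard_pos (Set.toFinite _), h3]; norm_num
  obtain ⟨β, hβ⟩ := hfne
  have hβα : orbit N β = orbit N α := orbit_eq_iff.mpr (hsub hβ)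
  have hsub' : fixedBy Ω g ⊆ orbit N β := by rw [hβα]; exact hsub
  -- semiregularity: uniqueness of transporter elements
  have hsreg : ∀ (x y : ↥N) (ω : Ω), (x : G) • ω = (y : G) • ω → x = y := by
    intro x y ω hxy
    by_contra hne
    refine hsemi ((y⁻¹ * x : ↥N) : G) (y⁻¹ * x).2 ?_ ω ?_
    · simpa [Subtype.ext_iff] using (fun h : y⁻¹ * x = 1 => hne (by
        rwa [inv_mul_eq_one, eq_comm] at h))
    · push_cast [mul_smul]
      rw [hxy, inv_smul_smul]
  -- all orbits have cardinality p^n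
  have horbcard : ∀ ω : Ω, Nat.card (orbit N ω) = p ^ n := by
    intro ω
    rw [← hcard]
    refine (Nat.card_congr (Equiv.ofBijective
      (fun x : ↥N => (⟨(x : G) • ω, mem_orbit ω x⟩ : orbit N ω)) ⟨?_, ?_⟩)).symm
    · intro a b hab
      simp only [Subtype.mk.injEq] at hab
      exact hsreg a b ω hab
    · rintro ⟨y, x, rfl⟩; exact ⟨x, rfl⟩
  -- disjointness of s from the fixed points
  have hdisj : ∀ x ∈ orbit N ω₀, x ∉ fixedBy Ω g := by
    intro x hx hfx
    exact hsne (by rw [← orbit_eq_iff.mpr hx, orbit_eq_iff.mpr (hsub hfx)])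
  -- fixed-by for powers
  have hfixpow : ∀ h : G, h ∈ Subgroup.zpowers g → h ≠ 1 → fixedBy Ω h = fixedBy Ω g := by
    intro h hmem hne
    have hsubf : fixedBy Ω g ⊆ fixedBy Ω h := by
      intro ω hω
      have : h ∈ stabilizer G ω := Subgroup.zpowers_le.mpr hω hmem
      exact this
    exact (Set.eq_of_subset_of_ncard_le hsubf (by rw [h3]; exact hfix.1 h hne)).symm
  -- the set s is invariant under powers of g
  have hzs : ∀ h : G, h ∈ Subgroup.zpowers g → h • (orbit N ω₀ : Set Ω) = orbit N ω₀ := by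
    intro h hmem
    have : h ∈ stabilizer G (orbit N ω₀ : Set Ω) := Subgroup.zpowers_le.mpr hgs hmem
    exact this
  -- order of g divides p ^ n
  have horddvd : orderOf g ∣ p ^ n := by
    let S : SubMulAction (Subgroup.zpowers g) Ω :=
      { carrier := orbit N ω₀
        smul_mem' := by
          intro h x hx
          have := hzs (h : G) h.2
          rw [← this]
          exact Set.smul_mem_smul_set hx }
    have hfree : ∀ h : ↥(Subgroup.zpowers g), h ≠ 1 → ∀ x : ↥S, h • x ≠ x := by
      intro h hne x hx
      have hne' : (h : G) ≠ 1 := fun hh => hne (Subtype.ext hh)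
      have : (x : Ω) ∈ fixedBy Ω (h : G) := by
        have := congrArg (Subtype.val) hx
        exact this
      rw [hfixpow (h : G) h.2 hne'] at this
      exact hdisj (x : Ω) x.2 this
    have hdvd := free_card_dvd hfree
    rw [Nat.card_zpowers] at hdvd
    have eS : ↥S ≃ ↥(orbit N ω₀) := Equiv.subtypeEquivRight (fun x => Iff.rfl)
    rwa [Nat.card_congr eS, horbcard ω₀] at hdvd
  -- n is nonzero
  have hn0 : n ≠ 0 := by
    intro h
    subst h
    exact hmin.2.1 (Subgroup.card_eq_one.mp (by simpa using hcard))
  -- an element g₁ of order p among the powers of g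
  obtain ⟨j, hj, hoj⟩ := (Nat.dvd_prime_pow hp).mp horddvd
  have hjne : j ≠ 0 := by
    intro h
    subst h
    exact hg (orderOf_eq_one_iff.mp (by simpa using hoj))
  set g₁ := g ^ (p ^ (j - 1)) with hg₁def
  have hg₁mem : g₁ ∈ Subgroup.zpowers g := Subgroup.npow_mem_zpowers g _
  have hord₁ : orderOf g₁ = p := by
    rw [hg₁def, orderOf_pow' g (pow_ne_zero _ hp.pos.ne'), hoj,
      Nat.gcd_eq_right (pow_dvd_pow p (Nat.sub_le j 1)),
      Nat.pow_div (Nat.sub_le j 1) hp.pos]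
    have : j - (j - 1) = 1 := by omega
    rw [this, pow_one]
  have hg₁ne : g₁ ≠ 1 := by
    intro h
    rw [h, orderOf_one] at hord₁
    exact hp.one_lt.ne' hord₁.symm
  have hfix₁ : fixedBy Ω g₁ = fixedBy Ω g := hfixpow g₁ hg₁mem hg₁ne
  have hg₁β : g₁ • β = β := by
    have : β ∈ fixedBy Ω g₁ := by rw [hfix₁]; exact hβ
    exact this
  have hg₁s : g₁ • (orbit N ω₀ : Set Ω) = orbit N ω₀ := hzs g₁ hg₁mem
  have hg₁p : g₁ ^ p = 1 := by rw [← hord₁]; exact pow_orderOf_eq_one g₁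
  -- N is abelian
  have hcomm : ∀ x y : G, x ∈ N → y ∈ N → x * y = y * x := by
    set Z := Subgroup.centralizer (N : Set G) ⊓ N with hZdef
    have hZnormal : Z.Normal := by
      constructor
      intro z hz c
      rw [Subgroup.mem_inf] at hz ⊢
      obtain ⟨hz1, hz2⟩ := hz
      refine ⟨?_, hN.conj_mem z hz2 c⟩
      rw [Subgroup.mem_centralizer_iff]
      intro x hx
      have hy : c⁻¹ * x * c ∈ N := by simpa using hN.conj_mem x hx c⁻¹
      have h2 := (Subgroup.mem_centralizer_iff.mp hz1) _ hy
      have h3 : c * ((c⁻¹ * x * c) * z) * c⁻¹ = c * (z * (c⁻¹ * x * c)) * c⁻¹ := by rw [h2]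
      calc x * (c * z * c⁻¹) = c * ((c⁻¹ * x * c) * z) * c⁻¹ := by group
        _ = c * (z * (c⁻¹ * x * c)) * c⁻¹ := h3
        _ = (c * z * c⁻¹) * x := by group
    haveI : Nontrivial ↥N := (Subgroup.nontrivial_iff_ne_bot N).mpr hmin.2.1
    have hpg : IsPGroup p ↥N := IsPGroup.of_card hcard
    haveI := hpg.center_nontrivial
    obtain ⟨z, hzne⟩ := exists_ne (1 : Subgroup.center ↥N)
    have hu1 : ((z : ↥N) : G) ≠ 1 := by
      intro h
      exact hzne (Subtype.ext (Subtype.ext h))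
    have huMem : ((z : ↥N) : G) ∈ Z := by
      rw [Subgroup.mem_inf]
      refine ⟨?_, (z : ↥N).2⟩
      rw [Subgroup.mem_centralizer_iff]
      intro x hx
      exact congrArg Subtype.val ((Subgroup.mem_center_iff.mp z.2) ⟨x, hx⟩)
    have hZN : Z = N := by
      rcases hmin.2.2 Z hZnormal inf_le_right with h | h
      · rw [h, Subgroup.mem_bot] at huMem
        exact absurd huMem hu1
      · exact h
    intro x y hx hy
    have hyZ : y ∈ Z := hZN.symm ▸ hy
    rw [Subgroup.mem_inf] at hyZ
    exact (Subgroup.mem_centralizer_iff.mp hyZ.1) x hx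
  -- N has exponent p
  have hexp : ∀ x ∈ N, x ^ p = 1 := by
    set T : Subgroup G :=
      { carrier := {x : G | x ∈ N ∧ x ^ p = 1}
        one_mem' := ⟨N.one_mem, one_pow p⟩
        mul_mem' := by
          rintro a b ⟨ha1, ha2⟩ ⟨hb1, hb2⟩
          refine ⟨N.mul_mem ha1 hb1, ?_⟩
          rw [Commute.mul_pow (hcomm a b ha1 hb1), ha2, hb2, one_mul]
        inv_mem' := by
          rintro a ⟨ha1, ha2⟩
          exact ⟨N.inv_mem ha1, by rw [inv_pow, ha2, inv_one]⟩ } with hTdef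
    have hTnormal : T.Normal := by
      constructor
      rintro a ⟨ha1, ha2⟩ c
      refine ⟨hN.conj_mem a ha1 c, ?_⟩
      rw [conj_pow, ha2, mul_one, mul_inv_cancel]
    have hTN : T = N := by
      rcases hmin.2.2 T hTnormal (fun x hx => hx.1) with h | h
      · exfalso
        have hpd : p ∣ Nat.card ↥N := by
          rw [hcard]
          exact dvd_pow_self p hn0
        obtain ⟨y, hy⟩ := exists_prime_orderOf_dvd_card' p hpd
        have hyT : (y : G) ∈ T := by
          refine ⟨y.2, ?_⟩
          have h1 : y ^ p = 1 := by rw [← hy]; exact pow_orderOf_eq_one y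
          have := congrArg Subtype.val h1
          push_cast at this
          exact this
        rw [h, Subgroup.mem_bot] at hyT
        have : y = 1 := Subtype.ext hyT
        rw [this, orderOf_one] at hy
        exact hp.one_lt.ne' hy.symm
      · exact h
    intro x hx
    have : x ∈ T := hTN.symm ▸ hx
    exact this.2
  -- conjugation automorphism and the homomorphism ψ
  letI : CommGroup ↥N :=
    { (inferInstance : Group ↥N) with
      mul_comm := fun a b => Subtype.ext (hcomm a b a.2 b.2) }
  set φ : MulAut ↥N := MulAut.conjNormal g₁ with hφdef
  have hφ : ∀ x : ↥N, ((φ x : ↥N) : G) = g₁ * x * g₁⁻¹ := fun x => rfl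
  set ψ : ↥N →* ↥N :=
    { toFun := fun x => φ x * x⁻¹
      map_one' := by simp
      map_mul' := by
        intro a b
        show φ (a * b) * (a * b)⁻¹ = (φ a * a⁻¹) * (φ b * b⁻¹)
        rw [map_mul, mul_inv_rev, mul_comm b⁻¹ a⁻¹, mul_mul_mul_comm] } with hψdef
  have hψapp : ∀ x : ↥N, ψ x = φ x * x⁻¹ := fun x => rfl
  -- the kernel of ψ is in bijection with the fixed points of g
  have hkerfix : Nat.card ψ.ker = 3 := by
    have e : ψ.ker ≃ (fixedBy Ω g : Set Ω) := by
      refine Equiv.ofBijective (fun x => ⟨((x : ↥N) : G) • β, ?_⟩) ⟨?_, ?_⟩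
      · rw [← hfix₁]
        show g₁ • (((x : ↥N) : G) • β) = ((x : ↥N) : G) • β
        have hx : φ (x : ↥N) = (x : ↥N) := by
          have hx2 := x.2
          rw [MonoidHom.mem_ker, hψapp, mul_inv_eq_one] at hx2
          exact hx2
        calc g₁ • ((((x : ↥N)) : G) • β) = (g₁ * x) • β := by rw [mul_smul]
          _ = ((g₁ * x * g₁⁻¹) * g₁) • β := by group
          _ = (g₁ * x * g₁⁻¹) • (g₁ • β) := by rw [mul_smul]
          _ = ((φ (x : ↥N) : ↥N) : G) • β := by rw [hg₁β, hφ]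
          _ = ((x : ↥N) : G) • β := by rw [hx]
      · intro a b hab
        simp only [Subtype.mk.injEq] at hab
        exact Subtype.ext (hsreg _ _ β hab)
      · rintro ⟨ω, hω⟩
        obtain ⟨y, rfl⟩ := hsub' hω
        have hfix' : g₁ • ((y : G) • β) = (y : G) • β := by
          have hmem : (y : G) • β ∈ fixedBy Ω g₁ := by rw [hfix₁]; exact hω
          exact hmem
        have hyfix : φ y = y := by
          apply hsreg
          show ((φ y : ↥N) : G) • β = (y : G) • β
          rw [hφ]
          have hg₁β' : g₁⁻¹ • β = β := by rw [inv_smul_eq_iff, hg₁β]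
          calc (g₁ * y * g₁⁻¹) • β = (g₁ * y) • (g₁⁻¹ • β) := by rw [← mul_smul]
            _ = (g₁ * y) • β := by rw [hg₁β']
            _ = g₁ • ((y : G) • β) := by rw [mul_smul]
            _ = (y : G) • β := hfix'
        refine ⟨⟨y, ?_⟩, rfl⟩
        rw [MonoidHom.mem_ker, hψapp, hyfix, mul_inv_cancel]
    rw [Nat.card_congr e, Nat.card_coe_set_eq, h3]
  -- p = 3
  have hp3 : p = 3 := by
    have hdvd3 : (3 : ℕ) ∣ p ^ n := by
      rw [← hcard, ← hkerfix]
      exact Subgroup.card_subgroup_dvd_card ψ.ker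
    have := Nat.Prime.dvd_of_dvd_pow Nat.prime_three hdvd3
    exact ((Nat.prime_dvd_prime_iff_eq Nat.prime_three hp).mp this).symm
  subst hp3
  -- cubes are trivial
  have hc3 : ∀ y : ↥N, y * (y * y) = 1 := by
    intro y
    have h1 : (y : G) ^ 3 = 1 := hexp y.1 y.2
    apply Subtype.ext
    push_cast
    rw [← h1, pow_succ, pow_two, mul_assoc]
  have h33 : g₁ * g₁ * g₁ = 1 := by
    rw [← hg₁p, pow_succ g₁ 2, pow_two g₁]
  have hφ3 : ∀ x : ↥N, φ (φ (φ x)) = x := by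
    intro x
    apply Subtype.ext
    rw [hφ, hφ, hφ]
    have expand : ∀ w : G, g₁ * (g₁ * (g₁ * w * g₁⁻¹) * g₁⁻¹) * g₁⁻¹
        = (g₁ * g₁ * g₁) * w * (g₁ * g₁ * g₁)⁻¹ := by
      intro w
      simp [mul_assoc, mul_inv_rev]
    rw [expand, h33, one_mul, inv_one, mul_one]
  have hinv2 : ∀ y : ↥N, y⁻¹ * y⁻¹ = y := by
    intro y
    rw [← mul_inv_rev]
    exact inv_eq_of_mul_eq_one_left (hc3 y)
  have hψ2eq : ∀ x : ↥N, ψ (ψ x) = (φ (φ x) * (φ x)⁻¹) * (x * (φ x)⁻¹) := by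
    intro x
    rw [hψapp, hψapp, map_mul, map_inv, mul_inv_rev, inv_inv]
  have hψ2eq' : ∀ x : ↥N, ψ (ψ x) = (φ (φ x) * x) * φ x := by
    intro x
    rw [hψ2eq x, mul_mul_mul_comm, hinv2 (φ x)]
  have hψ3 : ∀ x : ↥N, ψ (ψ (ψ x)) = 1 := by
    intro x
    rw [hψapp (ψ (ψ x)), mul_inv_eq_one, hψ2eq' x, map_mul, map_mul, hφ3 x]
    simp [mul_comm, mul_left_comm, mul_assoc]
  -- cardinalities
  have hcN : Nat.card ↥N = Nat.card ψ.range * 3 := by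
    rw [Subgroup.card_eq_card_quotient_mul_card_subgroup ψ.ker, hkerfix,
      Nat.card_congr (QuotientGroup.quotientKerEquivRange ψ).toEquiv]
  set K2 := (ψ.comp ψ).ker with hK2def
  have hrle : ψ.range ≤ K2 := by
    rintro x ⟨y, rfl⟩
    rw [MonoidHom.mem_ker, MonoidHom.comp_apply]
    exact hψ3 y
  have hK2le : Nat.card K2 ≤ 9 := by
    set ρ : ↥K2 →* ↥N := ψ.comp K2.subtype with hρdef
    have h1 : Nat.card K2 = Nat.card ρ.range * Nat.card ρ.ker := by
      rw [Subgroup.card_eq_card_quotient_mul_card_subgroup ρ.ker,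
        Nat.card_congr (QuotientGroup.quotientKerEquivRange ρ).toEquiv]
    have h2 : Nat.card ρ.range ≤ 3 := by
      rw [← hkerfix]
      refine Subgroup.card_le_of_le ?_
      rintro x ⟨y, rfl⟩
      have hy2 := y.2
      rw [MonoidHom.mem_ker, MonoidHom.comp_apply] at hy2
      exact hy2
    have h4 : Nat.card ρ.ker ≤ 3 := by
      rw [← hkerfix]
      refine Nat.card_le_card_of_injective
        (fun x => (⟨((x : ↥K2) : ↥N), ?_⟩ : ψ.ker)) ?_
      · exact x.2
      · intro a b hab
        simp only [Subtype.mk.injEq] at hab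
        exact Subtype.ext (Subtype.ext (congrArg (fun z : ψ.ker => (z : ↥N)) hab))
    calc Nat.card K2 = Nat.card ρ.range * Nat.card ρ.ker := h1
      _ ≤ 3 * 3 := Nat.mul_le_mul h2 h4
      _ = 9 := by norm_num
  -- n ≤ 3
  have hle27 : 3 ^ n ≤ 27 := by
    have h5 := Subgroup.card_le_of_le hrle
    calc (3 : ℕ) ^ n = Nat.card ↥N := hcard.symm
      _ = Nat.card ψ.range * 3 := hcN
      _ ≤ Nat.card K2 * 3 := Nat.mul_le_mul_right 3 h5
      _ ≤ 9 * 3 := Nat.mul_le_mul_right 3 hK2le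
      _ = 27 := by norm_num
  have hn3 : n ≤ 3 := by
    by_contra hcon
    push_neg at hcon
    have : (3 : ℕ) ^ 4 ≤ 3 ^ n := Nat.pow_le_pow_right (by norm_num) hcon
    norm_num at this
    omega
  -- exclude n = 3
  have hnne3 : n ≠ 3 := by
    intro hn3'
    subst hn3'
    have hr9 : Nat.card ψ.range = 9 := by
      have h6 := hcN
      rw [hcard] at h6
      omega
    have hK2eq : ψ.range = K2 := by
      have hle2 : Nat.card K2 ≤ Nat.card ψ.range := by rw [hr9]; exact hK2le
      have h9K2 : Nat.card K2 = 9 := le_antisymm hK2le (hr9 ▸ Subgroup.card_le_of_le hrle)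
      have hcards : ((ψ.range : Set ↥N)).ncard = ((K2 : Set ↥N)).ncard := by
        have e1 : ((ψ.range : Set ↥N)).ncard = Nat.card ψ.range := by
          rw [← Nat.card_coe_set_eq]
          exact Nat.card_congr (Equiv.subtypeEquivRight fun x => Iff.rfl)
        have e2 : ((K2 : Set ↥N)).ncard = Nat.card K2 := by
          rw [← Nat.card_coe_set_eq]
          exact Nat.card_congr (Equiv.subtypeEquivRight fun x => Iff.rfl)
        rw [e1, e2, hr9, h9K2]
      exact SetLike.coe_injective
        (Set.eq_of_subset_of_ncard_le hrle (le_of_eq hcards.symm) (Set.toFinite _))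
    obtain ⟨m', hm'⟩ : ∃ m' : ↥N, ((m' : ↥N) : G) • ω₀ = g₁ • ω₀ := by
      have hmem : g₁ • ω₀ ∈ orbit N ω₀ := by
        rw [← hg₁s]
        exact Set.smul_mem_smul_set (mem_orbit_self ω₀)
      obtain ⟨y, hy⟩ := hmem
      exact ⟨y, hy⟩
    have hstep : ∀ y : ↥N, g₁ • ((y : G) • ω₀) = ((φ y * m' : ↥N) : G) • ω₀ := by
      intro y
      push_cast
      rw [mul_smul, hφ]
      calc g₁ • ((y : G) • ω₀) = (g₁ * y) • ω₀ := by rw [mul_smul]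
        _ = ((g₁ * y * g₁⁻¹) * g₁) • ω₀ := by group
        _ = (g₁ * y * g₁⁻¹) • (g₁ • ω₀) := by rw [mul_smul]
        _ = (g₁ * y * g₁⁻¹) • (((m' : ↥N) : G) • ω₀) := by rw [hm']
    have e4 : ((φ (φ m') * (φ m' * m') : ↥N) : G) • ω₀ = ((1 : ↥N) : G) • ω₀ := by
      have l1 : g₁ • (g₁ • (g₁ • ω₀)) = ((φ (φ m') * (φ m' * m') : ↥N) : G) • ω₀ := by
        rw [← hm', hstep m', hstep (φ m' * m')]
        push_cast
        rw [map_mul]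
        push_cast
        rw [mul_assoc]
      have l2 : g₁ • (g₁ • (g₁ • ω₀)) = ω₀ := by
        rw [smul_smul, smul_smul]
        have h7 : g₁ * g₁ * g₁ = g₁ ^ 3 := by rw [pow_succ g₁ 2, pow_two g₁]
        rw [h7, hg₁p, one_smul]
      rw [← l1, l2]
      simp
    have hrel : φ (φ m') * (φ m' * m') = 1 := hsreg _ 1 ω₀ e4
    have hm'K2 : m' ∈ K2 := by
      rw [hK2def, MonoidHom.mem_ker, MonoidHom.comp_apply, hψ2eq' m']
      calc (φ (φ m') * m') * φ m' = φ (φ m') * (φ m' * m') := by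
            simp [mul_comm, mul_left_comm, mul_assoc]
        _ = 1 := hrel
    have hm'range : m' ∈ ψ.range := by rw [hK2eq]; exact hm'K2
    obtain ⟨x, hx⟩ := hm'range
    have hfixin : g₁ • (((x⁻¹ : ↥N) : G) • ω₀) = ((x⁻¹ : ↥N) : G) • ω₀ := by
      rw [hstep x⁻¹]
      have h8 : φ x⁻¹ * m' = x⁻¹ := by
        rw [← hx, hψapp, map_inv]
        group
      rw [h8]
    have hmemorb : ((x⁻¹ : ↥N) : G) • ω₀ ∈ orbit N ω₀ := mem_orbit ω₀ x⁻¹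
    refine hdisj _ hmemorb ?_
    rw [← hfix₁]
    exact hfixin
  -- conclude
  rw [hcard]
  have hn12 : n = 1 ∨ n = 2 := by omega
  rcases hn12 with h | h <;> subst h
  · left; norm_num
  · right; norm_num
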